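/- arXiv:2206.15100 — 2 statements merged into one kernel-verified Lean document; each statement's English description precedes it below -/
import Mathlib

section
/- Let T be a p-string of length n ending with a special static character $ that occurs nowhere else in T. If 1 ≤ i < j ≤ n and L_T[i] = L_T[j], then LF_T(i) < LF_T(j). -/
/-! Common framework: parameterized strings over static alphabet `σ` and
parameter alphabet `π`.  A p-string is a `List (σ ⊕ π)`. -/

variable {σ π : Type*}

instance instInhabSum [Inhabited σ] : Inhabited (σ ⊕ π) := ⟨Sum.inl default⟩

/-- one right rotation: the last character moves to the front -/
def rotR1 {α : Type*} (W : List α) : List α := W.rotate (W.length - 1)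

/-- `rotR W i` is the `i`-th right rotation `Rot(W, i)` -/
def rotR {α : Type*} (W : List α) : ℕ → List α
  | 0 => W
  | i + 1 => rotR1 (rotR W i)

/-- 1-based access `W[i]` (junk default outside the range) -/
def get1 {α : Type*} [Inhabited α] (W : List α) (i : ℕ) : α := W.getD (i - 1) default

/-- the prev-encoding `⟨T⟩`, a list over `σ ⊕ ℕ∞` -/
def prevEnc [DecidableEq σ] [DecidableEq π] (T : List (σ ⊕ π)) : List (σ ⊕ ℕ∞) :=
  (List.range T.length).map fun k =>
    match T[k]? with
    | none => Sum.inr ⊤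
    | some (Sum.inl a) => Sum.inl a
    | some (Sum.inr b) =>
      match ((List.range k).filter fun j => T[j]? = some (Sum.inr b)).max? with
      | none => Sum.inr ⊤
      | some j => Sum.inr ((k - j : ℕ) : ℕ∞)

/-- number of distinct parameter characters occurring in `W` -/
def distinctParams [DecidableEq π] (W : List (σ ⊕ π)) : ℕ :=
  (W.filterMap Sum.getRight?).dedup.length

/-- the encoding `⟦T⟧`, a list over `σ ⊕ ℕ`:  a static character is kept; a
parameter character at (1-based) position `i` is replaced by the number of
distinct parameter characters in `Rot(T, n-i)[1:ℓ]` where `ℓ` is the leftmost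
occurrence position of `T[i]` in `Rot(T, n-i)`. -/
def encodeE [DecidableEq σ] [DecidableEq π] (T : List (σ ⊕ π)) : List (σ ⊕ ℕ) :=
  (List.range T.length).map fun k =>
    match T[k]? with
    | none => Sum.inr 0
    | some (Sum.inl a) => Sum.inl a
    | some (Sum.inr b) =>
      let R := rotR T (T.length - (k + 1))
      Sum.inr (distinctParams (R.take (R.idxOf (Sum.inr b) + 1)))

/-- order on prev-encoding characters: every static character is smaller than
every element of `ℕ∞` (and `ℕ∞` carries its usual order with `∞` on top) -/
def pvlt [LT σ] : (σ ⊕ ℕ∞) → (σ ⊕ ℕ∞) → Prop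
  | Sum.inl a, Sum.inl b => a < b
  | Sum.inl _, Sum.inr _ => True
  | Sum.inr _, Sum.inl _ => False
  | Sum.inr x, Sum.inr y => x < y

/-- `T` is a p-string of length ≥ 1 ending with the static character `d`,
which occurs nowhere else in `T`. -/
def EndsWith [DecidableEq σ] [DecidableEq π] (T : List (σ ⊕ π)) (d : σ) : Prop :=
  1 ≤ T.length ∧ T.getLast? = some (Sum.inl d) ∧ T.count (Sum.inl d) = 1

/-- `RA` represents the parameterized rotation array `RA_T` (0-based indices:
`RA_T[i] = (RA ⟨i-1⟩).val + 1`): the prev-encodings of the rotations are listed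
in strictly increasing lexicographic order. -/
def IsRA [LinearOrder σ] [DecidableEq π] (T : List (σ ⊕ π))
    (RA : Fin T.length ≃ Fin T.length) : Prop :=
  ∀ i j : Fin T.length, i < j →
    List.Lex pvlt (prevEnc (rotR T ((RA i).val + 1))) (prevEnc (rotR T ((RA j).val + 1)))

/-- `LF` represents the LF mapping: `LF_T(i) = j` iff `T_{RA_T[i]+1} = T_{RA_T[j]}`. -/
def IsLF [LinearOrder σ] [DecidableEq π] (T : List (σ ⊕ π))
    (RA LF : Fin T.length ≃ Fin T.length) : Prop :=
  ∀ i : Fin T.length, rotR T ((RA i).val + 2) = rotR T ((RA (LF i)).val + 1)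

/-- the pBWT array `L_T[i] = ⟦T_{RA_T[i]}⟧[n]` -/
def Larr [LinearOrder σ] [DecidableEq π] [Inhabited σ] (T : List (σ ⊕ π))
    (RA : Fin T.length ≃ Fin T.length) (i : Fin T.length) : σ ⊕ ℕ :=
  get1 (encodeE (rotR T ((RA i).val + 1))) T.length

/-- the array `F_T[i] = ⟦T_{RA_T[i]}⟧[1]` -/
def Farr [LinearOrder σ] [DecidableEq π] [Inhabited σ] (T : List (σ ⊕ π))
    (RA : Fin T.length ≃ Fin T.length) (i : Fin T.length) : σ ⊕ ℕ :=
  get1 (encodeE (rotR T ((RA i).val + 1))) 1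

/-- longest common prefix of two lists -/
def lcp {α : Type*} [DecidableEq α] : List α → List α → List α
  | a :: as, b :: bs => if a = b then a :: lcp as bs else []
  | _, _ => []

/-- `lcp∞(X, Y)`: the number of `∞`'s in the longest common prefix of `X` and `Y` -/
def lcpInf [DecidableEq σ] (X Y : List (σ ⊕ ℕ∞)) : ℕ :=
  (lcp X Y).count (Sum.inr ⊤)

/-- the `∞`-LCP array (1-based): `LCP∞_T[i] = lcp∞(⟨T_{RA_T[i]}⟩, ⟨T_{RA_T[i+1]}⟩)`
for `1 ≤ i < n`, and `0` otherwise. -/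
def LCPa [LinearOrder σ] [DecidableEq π] (T : List (σ ⊕ π))
    (RA : Fin T.length ≃ Fin T.length) (i : ℕ) : ℕ :=
  if h : 1 ≤ i ∧ i < T.length then
    lcpInf (prevEnc (rotR T ((RA ⟨i - 1, by omega⟩).val + 1)))
           (prevEnc (rotR T ((RA ⟨i, h.2⟩).val + 1)))
  else 0

/-- parameterized match: a bijection on `σ ⊕ π` fixing all static characters
renames `S` into `T` -/
def PMatch (S T : List (σ ⊕ π)) : Prop :=
  ∃ f : (σ ⊕ π) ≃ (σ ⊕ π), (∀ a : σ, f (Sum.inl a) = Sum.inl a) ∧ S.map f = T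

/-- leftmost (1-based) occurrence position of `c` in `W`, `0` if absent -/
def leftPos [DecidableEq σ] [DecidableEq π] (W : List (σ ⊕ π)) (c : σ ⊕ π) : ℕ :=
  if W.contains c then W.idxOf c + 1 else 0

/-- rightmost (1-based) occurrence position of `c` in `W`, `0` if absent -/
def rightPos [DecidableEq σ] [DecidableEq π] (W : List (σ ⊕ π)) (c : σ ⊕ π) : ℕ :=
  if W.contains c then W.length - W.reverse.idxOf c else 0

def List.get? {α : Type*} (l : List α) (n : ℕ) : Option α := l[n]?

theorem List.get?_eq_getElem? {α : Type*} (l : List α) (n : ℕ) : l.get? n = l[n]? := rfl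

@[simp] theorem List.get?_nil {α : Type*} (n : ℕ) : ([] : List α).get? n = none := rfl

@[simp] theorem List.get?_cons_zero {α : Type*} (a : α) (l : List α) : (a :: l).get? 0 = some a := rfl

@[simp] theorem List.get?_cons_succ {α : Type*} (a : α) (l : List α) (n : ℕ) :
    (a :: l).get? (n + 1) = l.get? n := rfl

theorem List.get?_eq_none {α : Type*} {l : List α} {n : ℕ} : l.get? n = none ↔ l.length ≤ n :=
  List.getElem?_eq_none_iff

theorem List.get?_mem {α : Type*} {l : List α} {n : ℕ} {a : α} (h : l.get? n = some a) : a ∈ l :=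
  List.mem_of_getElem? h

theorem List.mem_iff_get? {α : Type*} {l : List α} {a : α} : a ∈ l ↔ ∃ n, l.get? n = some a :=
  List.mem_iff_getElem?

theorem List.get?_take {α : Type*} {l : List α} {n m : ℕ} (h : m < n) :
    (l.take n).get? m = l.get? m := List.getElem?_take_of_lt h

theorem List.get?_eq_get {α : Type*} {l : List α} {n : ℕ} (h : n < l.length) :
    l.get? n = some (l.get ⟨n, h⟩) := List.getElem?_eq_getElem h

theorem List.ext_get? {α : Type*} {l₁ l₂ : List α} (h : ∀ n, l₁.get? n = l₂.get? n) : l₁ = l₂ :=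
  List.ext_getElem? h

lemma rotR1_concat {α : Type*} (l : List α) (g : α) : rotR1 (l ++ [g]) = g :: l := by
  unfold rotR1
  rw [List.length_append, List.length_singleton, Nat.add_sub_cancel,
    List.rotate_eq_drop_append_take (by simp), List.drop_left, List.take_left]
  rfl

lemma rotR1_eq_getLast_cons {α : Type*} (X : List α) (h : X ≠ []) :
    rotR1 X = X.getLast h :: X.dropLast := by
  conv_lhs => rw [← List.dropLast_append_getLast h]
  exact rotR1_concat _ _

lemma length_rotR1 {α : Type*} (W : List α) : (rotR1 W).length = W.length :=
  List.length_rotate _ _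

lemma length_rotR {α : Type*} (W : List α) (k : ℕ) : (rotR W k).length = W.length := by
  induction k with
  | zero => rfl
  | succ k ih => rw [rotR, length_rotR1, ih]

section LexHelp
variable {α : Type*} {r : α → α → Prop}

lemma lex_of_take (l₁ l₂ : List α) (s : ℕ) (hpre : ∀ k < s, l₁.get? k = l₂.get? k)
    {a b : α} (ha : l₁.get? s = some a) (hb : l₂.get? s = some b) (hr : r a b) :
    List.Lex r l₁ l₂ := by
  induction s generalizing l₁ l₂ with
  | zero =>
    cases l₁ with
    | nil => simp at ha
    | cons x xs =>
      cases l₂ with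
      | nil => simp at hb
      | cons y ys =>
        simp only [List.get?_cons_zero, Option.some.injEq] at ha hb
        subst ha; subst hb
        exact List.Lex.rel hr
  | succ s ih =>
    cases l₁ with
    | nil => simp at ha
    | cons x xs =>
      cases l₂ with
      | nil => simp at hb
      | cons y ys =>
        have h0 := hpre 0 (Nat.succ_pos s)
        simp only [List.get?_cons_zero, Option.some.injEq] at h0
        subst h0
        exact List.Lex.cons (ih xs ys (fun k hk => hpre (k+1) (by omega)) ha hb)

lemma lex_extract [IsIrrefl α r] {l₁ l₂ : List α} (h : List.Lex r l₁ l₂)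
    (hlen : l₁.length = l₂.length) :
    ∃ s a b, (∀ k < s, l₁.get? k = l₂.get? k) ∧ l₁.get? s = some a ∧
      l₂.get? s = some b ∧ r a b := by
  induction h with
  | nil => simp at hlen
  | @rel x xs y ys hr => exact ⟨0, x, y, by simp, rfl, rfl, hr⟩
  | @cons x xs ys h ih =>
    obtain ⟨s, a, b, hpre, ha, hb, hr⟩ := ih (by simpa using hlen)
    refine ⟨s + 1, a, b, fun k hk => ?_, ha, hb, hr⟩
    cases k with
    | zero => rfl
    | succ k => exact hpre k (by omega)

lemma lex_asymm (has : ∀ a b, r a b → ¬ r b a) {l₁ l₂ : List α} (h : List.Lex r l₁ l₂)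
    (h' : List.Lex r l₂ l₁) : False := by
  induction h with
  | nil => cases h'
  | @rel x xs y ys hr =>
    cases h' with
    | rel hr' => exact has _ _ hr hr'
    | cons h'' => exact has _ _ hr hr
  | @cons x xs ys h ih =>
    cases h' with
    | rel hr' => exact has _ _ hr' hr'
    | cons h'' => exact ih h''

lemma lex_irrefl (hir : ∀ a, ¬ r a a) (l : List α) (h : List.Lex r l l) : False := by
  induction l with
  | nil => cases h
  | cons x xs ih =>
    cases h with
    | rel hr => exact hir _ hr
    | cons h' => exact ih h'

end LexHelp


def prevVal [DecidableEq σ] [DecidableEq π] (T : List (σ ⊕ π)) (k : ℕ) : σ ⊕ ℕ∞ :=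
  match T.get? k with
  | none => Sum.inr ⊤
  | some (Sum.inl a) => Sum.inl a
  | some (Sum.inr b) =>
    match ((List.range k).filter fun j => T.get? j = some (Sum.inr b)).max? with
    | none => Sum.inr ⊤
    | some j => Sum.inr ((k - j : ℕ) : ℕ∞)

lemma prevEnc_eq_map [DecidableEq σ] [DecidableEq π] (T : List (σ ⊕ π)) :
    prevEnc T = (List.range T.length).map (prevVal T) := rfl

lemma prevEnc_get? [DecidableEq σ] [DecidableEq π] (T : List (σ ⊕ π)) (k : ℕ) :
    (prevEnc T).get? k = if k < T.length then some (prevVal T k) else none := by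
  rw [prevEnc_eq_map]
  rcases lt_or_ge k T.length with h | h
  · simp [List.get?_eq_getElem?, List.getElem?_map, List.getElem?_range, h]
  · rw [if_neg (not_lt.2 h), List.get?_eq_none.2]
    simpa using h

lemma prevVal_congr [DecidableEq σ] [DecidableEq π] {T₁ T₂ : List (σ ⊕ π)} (k : ℕ)
    (h : ∀ j ≤ k, T₁.get? j = T₂.get? j) : prevVal T₁ k = prevVal T₂ k := by
  unfold prevVal
  rw [h k le_rfl]
  cases hc : T₂.get? k with
  | none => rfl
  | some c =>
    cases c with
    | inl a => rfl
    | inr b =>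
      have : ((List.range k).filter fun j => T₁.get? j = some (Sum.inr b)) =
          ((List.range k).filter fun j => T₂.get? j = some (Sum.inr b)) := by
        refine List.filter_congr fun j hj => ?_
        rw [h j (le_of_lt (List.mem_range.1 hj))]
      simp only [this]

section Spec
variable [DecidableEq σ] [DecidableEq π]

lemma prevVal_inl {W : List (σ ⊕ π)} {k : ℕ} {a : σ} (h : W.get? k = some (Sum.inl a)) :
    prevVal W k = Sum.inl a := by
  unfold prevVal; simp only [h]

lemma prevVal_top {W : List (σ ⊕ π)} {k : ℕ} {b : π} (h : W.get? k = some (Sum.inr b))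
    (hno : ∀ j < k, W.get? j ≠ some (Sum.inr b)) : prevVal W k = Sum.inr ⊤ := by
  unfold prevVal; rw [h]
  have : ((List.range k).filter fun j => W.get? j = some (Sum.inr b)) = [] := by
    refine List.filter_eq_nil_iff.2 fun j hj => ?_
    simpa using hno j (List.mem_range.1 hj)
  simp only [h, this]; rfl

lemma prevVal_found {W : List (σ ⊕ π)} {k : ℕ} {b : π} (h : W.get? k = some (Sum.inr b))
    {j : ℕ} (hj : j < k) (hocc : W.get? j = some (Sum.inr b))
    (hmax : ∀ j', j < j' → j' < k → W.get? j' ≠ some (Sum.inr b)) :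
    prevVal W k = Sum.inr ((k - j : ℕ) : ℕ∞) := by
  unfold prevVal
  have : ((List.range k).filter fun j => W.get? j = some (Sum.inr b)).max? = some j := by
    rw [List.max?_eq_some_iff']
    constructor
    · simp only [List.mem_filter, List.mem_range]
      exact ⟨hj, by simp only [decide_eq_true_eq]; exact hocc⟩
    · intro j' hj'
      simp only [List.mem_filter, List.mem_range, decide_eq_true_eq] at hj'
      by_contra hlt
      exact hmax j' (lt_of_not_ge hlt) hj'.1 hj'.2
  simp only [h, this]

lemma prevVal_param_cases {W : List (σ ⊕ π)} {k : ℕ} {b : π}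
    (h : W.get? k = some (Sum.inr b)) :
    (prevVal W k = Sum.inr ⊤ ∧ ∀ j < k, W.get? j ≠ some (Sum.inr b)) ∨
    (∃ j, j < k ∧ W.get? j = some (Sum.inr b) ∧
      (∀ j', j < j' → j' < k → W.get? j' ≠ some (Sum.inr b)) ∧
      prevVal W k = Sum.inr ((k - j : ℕ) : ℕ∞)) := by
  cases hm : ((List.range k).filter fun j => W.get? j = some (Sum.inr b)).max? with
  | none =>
    left
    have hnil := List.max?_eq_none_iff.1 hm
    have hno : ∀ j < k, W.get? j ≠ some (Sum.inr b) := by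
      intro j hjk hocc
      have : j ∈ ((List.range k).filter fun j => W.get? j = some (Sum.inr b)) := by
        exact List.mem_filter.2 ⟨List.mem_range.2 hjk, by simp only [decide_eq_true_eq]; exact hocc⟩
      rw [hnil] at this; exact absurd this (List.not_mem_nil (a := j))
    exact ⟨prevVal_top h hno, hno⟩
  | some j =>
    right
    rw [List.max?_eq_some_iff'] at hm
    obtain ⟨hmem, hub⟩ := hm
    simp only [List.mem_filter, List.mem_range, decide_eq_true_eq] at hmem
    refine ⟨j, hmem.1, hmem.2, ?_, ?_⟩
    · intro j' h1 h2 hocc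
      have : j' ≤ j := hub j' (List.mem_filter.2 ⟨List.mem_range.2 h2, by simp only [decide_eq_true_eq]; exact hocc⟩)
      omega
    · exact prevVal_found h hmem.1 hmem.2 fun j' h1 h2 hocc => by
        have : j' ≤ j := hub j' (List.mem_filter.2 ⟨List.mem_range.2 h2, by simp only [decide_eq_true_eq]; exact hocc⟩)
        omega

end Spec

section Cons
variable [DecidableEq σ] [DecidableEq π]

lemma coe_ne_top' (n : ℕ) : ((n : ℕ∞)) ≠ ⊤ := ENat.coe_ne_top n

lemma get?_param_of_prevVal_inr {W : List (σ ⊕ π)} {k : ℕ} {v : ℕ∞}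
    (h : prevVal W k = Sum.inr v) (hv : v ≠ ⊤) :
    ∃ b, W.get? k = some (Sum.inr b) := by
  rcases hg : W.get? k with _ | (a | b)
  · unfold prevVal at h; rw [hg] at h
    simp only [Sum.inr.injEq] at h; exact absurd h.symm hv
  · rw [prevVal_inl hg] at h; exact absurd h (by simp)
  · exact ⟨b, rfl⟩

lemma prevVal_inr_le {W : List (σ ⊕ π)} {k : ℕ} {v : ℕ∞}
    (h : prevVal W k = Sum.inr v) (hv : v ≠ ⊤) : v ≤ (k : ℕ∞) := by
  obtain ⟨b, hg⟩ := get?_param_of_prevVal_inr h hv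
  rcases prevVal_param_cases hg with ⟨htop, -⟩ | ⟨j, hj, -, -, hval⟩
  · rw [htop] at h; simp only [Sum.inr.injEq] at h; exact absurd h.symm hv
  · rw [hval] at h; simp only [Sum.inr.injEq] at h
    rw [← h]; exact_mod_cast Nat.sub_le k j

/-- if `prevVal W k = ⊤` and `W.get? k = some (Sum.inr b)` then `k` is the leftmost
occurrence of `Sum.inr b` -/
lemma no_earlier_of_prevVal_top {W : List (σ ⊕ π)} {k : ℕ} {b : π}
    (hg : W.get? k = some (Sum.inr b)) (h : prevVal W k = Sum.inr ⊤) :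
    ∀ j < k, W.get? j ≠ some (Sum.inr b) := by
  rcases prevVal_param_cases hg with ⟨-, hno⟩ | ⟨j, hj, -, -, hval⟩
  · exact hno
  · rw [hval] at h; simp only [Sum.inr.injEq] at h
    exact absurd h (coe_ne_top' _)

/-- prepending a character: the generic unchanged case -/
lemma prevVal_cons_of_ne (c : σ ⊕ π) {Z : List (σ ⊕ π)} {k : ℕ} (hk : k < Z.length)
    (h : Z.get? k ≠ some c ∨ prevVal Z k ≠ Sum.inr ⊤) :
    prevVal (c :: Z) (k + 1) = prevVal Z k := by
  rcases hZk : Z.get? k with _ | (a | b)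
  · exact absurd (List.get?_eq_none.1 hZk) (not_le.2 hk)
  · rw [prevVal_inl hZk, prevVal_inl (show (c :: Z).get? (k+1) = some (Sum.inl a) from hZk)]
  · rcases prevVal_param_cases hZk with ⟨htop, hno⟩ | ⟨j, hj, hocc, hmax, hval⟩
    · have hcb : c ≠ Sum.inr b := by
        rcases h with h | h
        · intro hc; rw [hc] at h; exact h hZk
        · exact absurd htop h
      rw [htop]
      refine prevVal_top (show (c :: Z).get? (k+1) = some (Sum.inr b) from hZk) ?_
      intro j hjk
      cases j with
      | zero => simpa using fun hc => hcb hc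
      | succ j => exact hno j (by omega)
    · rw [hval]
      have hsub : (k : ℕ) - j = (k + 1) - (j + 1) := by omega
      rw [hsub]
      refine prevVal_found (show (c :: Z).get? (k+1) = some (Sum.inr b) from hZk)
        (by omega) (show (c :: Z).get? (j+1) = some (Sum.inr b) from hocc) ?_
      intro j' h1 h2
      cases j' with
      | zero => omega
      | succ j'' => exact hmax j'' (by omega) (by omega)

end Cons

section Cons2
variable [DecidableEq σ] [DecidableEq π]

/-- prepending a parameter character: the replaced position -/
lemma prevVal_cons_of_top {b : π} {Z : List (σ ⊕ π)} {k : ℕ}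
    (hocc : Z.get? k = some (Sum.inr b)) (htop : prevVal Z k = Sum.inr ⊤) :
    prevVal (Sum.inr b :: Z) (k + 1) = Sum.inr ((k + 1 : ℕ) : ℕ∞) := by
  have hno := no_earlier_of_prevVal_top hocc htop
  have : ((k : ℕ) + 1) = (k + 1) - 0 := by omega
  rw [this]
  refine prevVal_found (show (Sum.inr b :: Z).get? (k+1) = some (Sum.inr b) from hocc)
    (by omega) rfl ?_
  intro j' h1 h2
  cases j' with
  | zero => omega
  | succ j'' => exact hno j'' (by omega)

lemma prevVal_dropLast {X : List (σ ⊕ π)} {k : ℕ} (hk : k < X.length - 1) :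
    prevVal X.dropLast k = prevVal X k := by
  refine prevVal_congr k fun j hj => ?_
  rw [List.get?_eq_getElem?, List.get?_eq_getElem?, List.getElem?_dropLast,
    if_pos (by omega)]

lemma get?_dropLast' {α : Type*} {X : List α} {k : ℕ} (hk : k < X.length - 1) :
    X.dropLast.get? k = X.get? k := by
  rw [List.get?_eq_getElem?, List.get?_eq_getElem?, List.getElem?_dropLast, if_pos hk]

end Cons2

section IndexOf
variable {α : Type*} [BEq α] [LawfulBEq α]

lemma idxOf_lt_length' {l : List α} {a : α} (h : a ∈ l) : l.idxOf a < l.length := by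
  induction l with
  | nil => simp at h
  | cons x xs ih =>
    rw [List.idxOf_cons]
    cases hx : x == a with
    | true => simp
    | false =>
      simp only [cond_false, List.length_cons, Nat.succ_lt_succ_iff]
      rcases List.mem_cons.1 h with h | h
      · rw [h, beq_self_eq_true] at hx; exact Bool.noConfusion hx
      · exact ih h

lemma idxOf_get?' {l : List α} {a : α} (h : a ∈ l) : l.get? (l.idxOf a) = some a := by
  induction l with
  | nil => simp at h
  | cons x xs ih =>
    rw [List.idxOf_cons]
    cases hx : x == a with
    | true => simpa using eq_of_beq hx
    | false =>
      simp only [cond_false, List.get?_cons_succ]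
      rcases List.mem_cons.1 h with h | h
      · rw [h, beq_self_eq_true] at hx; exact Bool.noConfusion hx
      · exact ih h

lemma get?_ne_of_lt_idxOf {l : List α} {a : α} {j : ℕ} (hj : j < l.idxOf a) :
    l.get? j ≠ some a := by
  induction l generalizing j with
  | nil => simp
  | cons x xs ih =>
    rw [List.idxOf_cons] at hj
    cases hx : x == a with
    | true => rw [hx] at hj; simp at hj
    | false =>
      rw [hx] at hj
      simp only [cond_false] at hj
      cases j with
      | zero =>
        simp only [List.get?_cons_zero, ne_eq, Option.some.injEq]
        intro h
        rw [h, beq_self_eq_true] at hx; exact Bool.noConfusion hx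
      | succ j => exact ih (by omega)

lemma eq_idxOf_of_leftmost {l : List α} {a : α} {k : ℕ}
    (hk : l.get? k = some a) (hno : ∀ j < k, l.get? j ≠ some a) : l.idxOf a = k := by
  have hmem : a ∈ l := List.get?_mem hk
  have h1 : l.get? (l.idxOf a) = some a := idxOf_get?' hmem
  rcases lt_trichotomy (l.idxOf a) k with h | h | h
  · exact absurd h1 (hno _ h)
  · exact h
  · exact absurd hk (get?_ne_of_lt_idxOf h)

end IndexOf

instance instLawfulBEqSumOfDec [DecidableEq σ] [DecidableEq π] : LawfulBEq (σ ⊕ π) := by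
  refine { eq_of_beq := ?_, rfl := ?_ }
  rotate_left
  · intro a b h
    cases a <;> cases b
    · exact congrArg _ (eq_of_beq h)
    · exact Bool.noConfusion h
    · exact Bool.noConfusion h
    · exact congrArg _ (eq_of_beq h)
  · intro a
    cases a with
    | inl a => show (a == a) = true; exact beq_self_eq_true a
    | inr b => show (b == b) = true; exact beq_self_eq_true b

def cntTop [DecidableEq σ] [DecidableEq π] (W : List (σ ⊕ π)) (t : ℕ) : ℕ :=
  ((Finset.range t).filter fun k => prevVal W k = Sum.inr ⊤).card

section Cnt
variable [DecidableEq σ] [DecidableEq π]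

lemma cntTop_mono (W : List (σ ⊕ π)) {t₁ t₂ : ℕ} (h : t₁ ≤ t₂) :
    cntTop W t₁ ≤ cntTop W t₂ :=
  Finset.card_le_card (Finset.filter_subset_filter _ (Finset.range_subset_range.2 h))

lemma cntTop_congr {W₁ W₂ : List (σ ⊕ π)} {t : ℕ}
    (h : ∀ k < t, prevVal W₁ k = prevVal W₂ k) : cntTop W₁ t = cntTop W₂ t := by
  unfold cntTop
  congr 1
  refine Finset.filter_congr fun k hk => ?_
  rw [h k (Finset.mem_range.1 hk)]

lemma cntTop_succ (W : List (σ ⊕ π)) (t : ℕ) :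
    cntTop W (t + 1) = cntTop W t + (if prevVal W t = Sum.inr ⊤ then 1 else 0) := by
  unfold cntTop
  rw [Finset.range_add_one, Finset.filter_insert]
  split
  · rw [Finset.card_insert_of_notMem (by simp)]
  · rfl

lemma cntTop_lt_of_top {W : List (σ ⊕ π)} {k₁ k₂ : ℕ} (h : k₁ < k₂)
    (htop : prevVal W k₂ = Sum.inr ⊤) : cntTop W (k₁ + 1) < cntTop W (k₂ + 1) := by
  have h1 : cntTop W (k₁ + 1) ≤ cntTop W k₂ := cntTop_mono W (by omega)
  have h2 := cntTop_succ W k₂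
  rw [if_pos htop] at h2
  omega

lemma top_pos_unique {W : List (σ ⊕ π)} {k₁ k₂ : ℕ} (h₁ : prevVal W k₁ = Sum.inr ⊤)
    (h₂ : prevVal W k₂ = Sum.inr ⊤) (hc : cntTop W (k₁ + 1) = cntTop W (k₂ + 1)) :
    k₁ = k₂ := by
  rcases lt_trichotomy k₁ k₂ with h | h | h
  · exact absurd hc (Nat.ne_of_lt (cntTop_lt_of_top h h₂))
  · exact h
  · exact absurd hc.symm (Nat.ne_of_lt (cntTop_lt_of_top h h₁))

end Cnt

section Distinct
variable [DecidableEq σ] [DecidableEq π]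

omit [DecidableEq σ] [DecidableEq π] in
lemma mem_take_iff_exists {W : List (σ ⊕ π)} {c : σ ⊕ π} {t : ℕ} :
    c ∈ W.take t ↔ ∃ j < t, W.get? j = some c := by
  rw [List.mem_iff_get?]
  constructor
  · rintro ⟨j, hj⟩
    have hjt : j < t := by
      by_contra h
      rw [List.get?_eq_none.2 (le_trans (le_trans (List.length_take_le t W)
        (not_lt.1 h)) le_rfl)] at hj
      · exact nomatch hj
    exact ⟨j, hjt, by rwa [List.get?_take hjt] at hj⟩
  · rintro ⟨j, hjt, hj⟩
    exact ⟨j, by rwa [List.get?_take hjt]⟩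

lemma dedup_len_concat {β : Type*} [DecidableEq β] (l : List β) (b : β) :
    (l ++ [b]).dedup.length = l.dedup.length + (if b ∈ l then 0 else 1) := by
  rw [← List.card_toFinset, ← List.card_toFinset, List.toFinset_append]
  have h1 : l.toFinset ∪ [b].toFinset = insert b l.toFinset := by
    ext x; simp [or_comm]
  rw [h1]
  by_cases hb : b ∈ l
  · rw [if_pos hb, Finset.card_insert_of_mem (List.mem_toFinset.2 hb), Nat.add_zero]
  · rw [Finset.card_insert_of_notMem (fun h => hb (List.mem_toFinset.1 h)), if_neg hb]

lemma distinct_take (W : List (σ ⊕ π)) : ∀ t, t ≤ W.length →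
    distinctParams (W.take t) = cntTop W t := by
  intro t
  induction t with
  | zero => intro _; simp [distinctParams, cntTop]
  | succ t ih =>
    intro ht
    have ht' : t < W.length := by omega
    obtain ⟨c, hc⟩ : ∃ c, W.get? t = some c := by
      rcases hg : W.get? t with _ | c
      · exact absurd (List.get?_eq_none.1 hg) (not_le.2 ht')
      · exact ⟨c, rfl⟩
    have htake : W.take (t + 1) = W.take t ++ [c] := by
      rw [List.take_succ]
      congr 1
      rw [← List.get?_eq_getElem?, hc]
      rfl
    rw [cntTop_succ, ← ih (by omega), htake]
    unfold distinctParams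
    rw [List.filterMap_append]
    cases c with
    | inl a =>
      have : ([Sum.inl a] : List (σ ⊕ π)).filterMap Sum.getRight? = [] := rfl
      rw [this, List.append_nil, prevVal_inl hc]
      simp
    | inr b =>
      have h2 : ([Sum.inr b] : List (σ ⊕ π)).filterMap Sum.getRight? = [b] := rfl
      rw [h2, dedup_len_concat]
      have hmem : b ∈ (W.take t).filterMap Sum.getRight? ↔ ∃ j < t, W.get? j = some (Sum.inr b) := by
        rw [List.mem_filterMap]
        constructor
        · rintro ⟨x, hx, hgx⟩
          cases x with
          | inl a => exact absurd hgx (by simp [Sum.getRight?])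
          | inr b' =>
            have : b' = b := by simpa [Sum.getRight?] using hgx
            subst this
            exact mem_take_iff_exists.1 hx
        · rintro ⟨j, hjt, hj⟩
          exact ⟨Sum.inr b, mem_take_iff_exists.2 ⟨j, hjt, hj⟩, rfl⟩
      by_cases hb : ∃ j < t, W.get? j = some (Sum.inr b)
      · rw [if_pos (hmem.2 hb)]
        have : prevVal W t ≠ Sum.inr ⊤ := by
          intro htop
          obtain ⟨j, hjt, hj⟩ := hb
          exact no_earlier_of_prevVal_top hc htop j hjt hj
        rw [if_neg this]
      · rw [if_neg (fun h => hb (hmem.1 h))]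
        rw [if_pos (prevVal_top hc (by push_neg at hb; exact fun j hj => hb j hj))]

end Distinct

section RotEntry
variable [DecidableEq σ] [DecidableEq π]

omit [DecidableEq σ] [DecidableEq π] in
lemma get?_last {α : Type*} (X : List α) (h : X ≠ []) :
    X.get? (X.length - 1) = some (X.getLast h) := by
  rw [List.getLast_eq_getElem]
  exact List.get?_eq_get _

lemma eq_leftmost {X : List (σ ⊕ π)} {b : π} {k : ℕ} (hg : X.get? k = some (Sum.inr b))
    (htop : prevVal X k = Sum.inr ⊤) : X.idxOf (Sum.inr b) = k :=
  eq_idxOf_of_leftmost hg (no_earlier_of_prevVal_top hg htop)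

lemma rotR1_eq_last_cons {X : List (σ ⊕ π)} {c : σ ⊕ π}
    (hlast : X.get? (X.length - 1) = some c) (h : X ≠ []) :
    rotR1 X = c :: X.dropLast := by
  rw [rotR1_eq_getLast_cons X h]
  rw [get?_last X h] at hlast
  rw [Option.some_inj.1 hlast]

lemma rot_prevVal_zero_inl {X : List (σ ⊕ π)} {a : σ} (h : X ≠ [])
    (hlast : X.get? (X.length - 1) = some (Sum.inl a)) :
    prevVal (rotR1 X) 0 = Sum.inl a := by
  rw [rotR1_eq_last_cons hlast h]
  exact prevVal_inl rfl

lemma rot_prevVal_zero_inr {X : List (σ ⊕ π)} {b : π} (h : X ≠ [])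
    (hlast : X.get? (X.length - 1) = some (Sum.inr b)) :
    prevVal (rotR1 X) 0 = Sum.inr ⊤ := by
  rw [rotR1_eq_last_cons hlast h]
  exact prevVal_top rfl (by omega)

lemma rot_prevVal_entry_inl {X : List (σ ⊕ π)} {a : σ} {k : ℕ} (h : X ≠ [])
    (hlast : X.get? (X.length - 1) = some (Sum.inl a)) (hk : k < X.length - 1) :
    prevVal (rotR1 X) (k + 1) = prevVal X k := by
  rw [rotR1_eq_last_cons hlast h]
  rw [← prevVal_dropLast hk]
  refine prevVal_cons_of_ne _ (by rw [List.length_dropLast]; omega) ?_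
  rcases hg : X.dropLast.get? k with _ | (a' | b')
  · exact Or.inl (by simp [hg])
  · exact Or.inr (by rw [prevVal_inl hg]; simp)
  · exact Or.inl (by simp [hg])

lemma rot_prevVal_entry_inr {X : List (σ ⊕ π)} {b : π} {k : ℕ} (h : X ≠ [])
    (hlast : X.get? (X.length - 1) = some (Sum.inr b)) (hk : k < X.length - 1) :
    prevVal (rotR1 X) (k + 1) =
      if k = X.idxOf (Sum.inr b) then Sum.inr ((k + 1 : ℕ) : ℕ∞)
      else prevVal X k := by
  have hZlen : X.dropLast.length = X.length - 1 := List.length_dropLast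
  rw [rotR1_eq_last_cons hlast h]
  split
  · next heq =>
    subst heq
    have hmem : Sum.inr b ∈ X := List.get?_mem hlast
    have hocc : X.dropLast.get? (X.idxOf (Sum.inr b)) = some (Sum.inr b) := by
      rw [get?_dropLast' hk]; exact idxOf_get?' hmem
    have htop : prevVal X.dropLast (X.idxOf (Sum.inr b)) = Sum.inr ⊤ := by
      rw [prevVal_dropLast hk]
      exact prevVal_top (idxOf_get?' hmem) fun j hj => get?_ne_of_lt_idxOf hj
    exact prevVal_cons_of_top hocc htop
  · next hne =>
    rw [← prevVal_dropLast hk]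
    refine prevVal_cons_of_ne _ (by omega) ?_
    by_contra hcon
    push_neg at hcon
    obtain ⟨h1, h2⟩ := hcon
    rw [get?_dropLast' hk] at h1
    rw [prevVal_dropLast hk] at h2
    exact hne (eq_leftmost h1 h2).symm

end RotEntry

section Pvlt
variable [LinearOrder σ]

lemma pvlt_irrefl (x : σ ⊕ ℕ∞) : ¬ pvlt x x := by
  cases x <;> simp [pvlt]

lemma pvlt_asymm : ∀ x y : σ ⊕ ℕ∞, pvlt x y → ¬ pvlt y x
  | Sum.inl _, Sum.inl _, h => fun h' => absurd h' (not_lt.2 (le_of_lt h))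
  | Sum.inl _, Sum.inr _, _ => fun h' => h'
  | Sum.inr _, Sum.inl _, h => h.elim
  | Sum.inr _, Sum.inr _, h => fun h' => absurd h' (not_lt.2 (le_of_lt h))

lemma not_pvlt_top (y : σ ⊕ ℕ∞) : ¬ pvlt (Sum.inr ⊤) y := by
  cases y <;> simp [pvlt]

end Pvlt

def lastE [DecidableEq σ] [DecidableEq π] (W : List (σ ⊕ π)) : σ ⊕ ℕ :=
  match W.get? (W.length - 1) with
  | none => Sum.inr 0
  | some (Sum.inl a) => Sum.inl a
  | some (Sum.inr b) => Sum.inr (distinctParams (W.take (W.idxOf (Sum.inr b) + 1)))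

section LastE
variable [DecidableEq σ] [DecidableEq π]

lemma lastE_inl {W : List (σ ⊕ π)} {a : σ} (h : W.get? (W.length - 1) = some (Sum.inl a)) :
    lastE W = Sum.inl a := by
  unfold lastE; simp only [h]

lemma lastE_inr {W : List (σ ⊕ π)} {b : π} (h : W.get? (W.length - 1) = some (Sum.inr b)) :
    lastE W = Sum.inr (distinctParams (W.take (W.idxOf (Sum.inr b) + 1))) := by
  unfold lastE; simp only [h]

lemma prevEnc_length (W : List (σ ⊕ π)) : (prevEnc W).length = W.length := by
  rw [prevEnc_eq_map]; simp

end LastE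

theorem step_lemma [LinearOrder σ] [DecidableEq π] {X Y : List (σ ⊕ π)}
    (hlen : X.length = Y.length) (hn : 1 ≤ X.length)
    (hlex : List.Lex pvlt (prevEnc X) (prevEnc Y))
    (hL : lastE X = lastE Y) :
    List.Lex pvlt (prevEnc (rotR1 X)) (prevEnc (rotR1 Y)) ∨
      prevEnc (rotR1 X) = prevEnc (rotR1 Y) := by
  have hXne : X ≠ [] := List.ne_nil_of_length_pos (by omega)
  have hYne : Y ≠ [] := List.ne_nil_of_length_pos (by omega)
  haveI : IsIrrefl (σ ⊕ ℕ∞) pvlt := ⟨fun x => pvlt_irrefl x⟩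
  obtain ⟨t, a0, b0, hpre, ha0, hb0, hr0⟩ := lex_extract hlex
    (by rw [prevEnc_length, prevEnc_length, hlen])
  have ht : t < X.length := by
    by_contra h
    rw [prevEnc_get?, if_neg (by omega)] at ha0
    exact nomatch ha0
  rw [prevEnc_get?, if_pos ht] at ha0
  rw [prevEnc_get?, if_pos (by omega)] at hb0
  have hr' : pvlt (prevVal X t) (prevVal Y t) := by
    rw [Option.some_inj.1 ha0, Option.some_inj.1 hb0]; exact hr0
  have hpv : ∀ k < t, prevVal X k = prevVal Y k := by
    intro k hk
    have := hpre k hk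
    rw [prevEnc_get?, prevEnc_get?, if_pos (by omega), if_pos (by omega)] at this
    exact Option.some_inj.1 this
  -- lengths of rotated encodings
  have hAlen : (prevEnc (rotR1 X)).length = X.length := by
    rw [prevEnc_length, length_rotR1]
  have hBlen : (prevEnc (rotR1 Y)).length = Y.length := by
    rw [prevEnc_length, length_rotR1]
  rcases hcX : X.get? (X.length - 1) with _ | (a | b)
  · exact absurd (List.get?_eq_none.1 hcX) (by omega)
  case some.inl =>
    -- static last character in X
    rcases hcY : Y.get? (Y.length - 1) with _ | (a' | b')
    · exact absurd (List.get?_eq_none.1 hcY) (by omega)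
    case some.inr =>
      rw [lastE_inl hcX, lastE_inr hcY] at hL
      exact absurd hL (by simp)
    case some.inl =>
      rw [lastE_inl hcX, lastE_inl hcY] at hL
      have haa : a = a' := Sum.inl_injective hL
      subst haa
      have htn : t < X.length - 1 := by
        rcases lt_or_eq_of_le (show t ≤ X.length - 1 by omega) with h | h
        · exact h
        · exfalso
          rw [h, prevVal_inl hcX] at hr'
          have : prevVal Y (X.length - 1) = Sum.inl a := by
            rw [hlen]; exact prevVal_inl hcY
          rw [this] at hr'
          exact pvlt_irrefl _ hr'
      left
      refine lex_of_take _ _ (t + 1) ?_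
        (show (prevEnc (rotR1 X)).get? (t+1) = some (prevVal X t) from ?_)
        (show (prevEnc (rotR1 Y)).get? (t+1) = some (prevVal Y t) from ?_) hr'
      · intro k hk
        cases k with
        | zero =>
          rw [prevEnc_get?, prevEnc_get?, if_pos (by rw [length_rotR1]; omega),
            if_pos (by rw [length_rotR1]; omega),
            rot_prevVal_zero_inl hXne hcX, rot_prevVal_zero_inl hYne hcY]
        | succ k =>
          rw [prevEnc_get?, prevEnc_get?, if_pos (by rw [length_rotR1]; omega),
            if_pos (by rw [length_rotR1]; omega),
            rot_prevVal_entry_inl hXne hcX (by omega),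
            rot_prevVal_entry_inl hYne hcY (by omega), hpv k (by omega)]
      · rw [prevEnc_get?, if_pos (by rw [length_rotR1]; omega),
          rot_prevVal_entry_inl hXne hcX htn]
      · rw [prevEnc_get?, if_pos (by rw [length_rotR1]; omega),
          rot_prevVal_entry_inl hYne hcY (by omega)]
  case some.inr =>
    rcases hcY : Y.get? (Y.length - 1) with _ | (a' | b')
    · exact absurd (List.get?_eq_none.1 hcY) (by omega)
    case some.inl =>
      rw [lastE_inr hcX, lastE_inl hcY] at hL
      exact absurd hL (by simp)
    case some.inr =>
      -- both end with a parameter character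
      rw [lastE_inr hcX, lastE_inr hcY] at hL
      have hm := Sum.inr_injective hL
      have hmemX : Sum.inr b ∈ X := List.get?_mem hcX
      have hmemY : Sum.inr b' ∈ Y := List.get?_mem hcY
      set lX := X.idxOf (Sum.inr b) with hlXdef
      set lY := Y.idxOf (Sum.inr b') with hlYdef
      have hlX_lt : lX < X.length := idxOf_lt_length' hmemX
      have hlY_lt : lY < Y.length := idxOf_lt_length' hmemY
      have occX : X.get? lX = some (Sum.inr b) := idxOf_get?' hmemX
      have occY : Y.get? lY = some (Sum.inr b') := idxOf_get?' hmemY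
      have topX : prevVal X lX = Sum.inr ⊤ :=
        prevVal_top occX fun j hj => get?_ne_of_lt_idxOf hj
      have topY : prevVal Y lY = Sum.inr ⊤ :=
        prevVal_top occY fun j hj => get?_ne_of_lt_idxOf hj
      set m := cntTop X (lX + 1) with hmdef
      have hmX : distinctParams (X.take (lX + 1)) = m := distinct_take X _ (by omega)
      have hmY : cntTop Y (lY + 1) = m := by
        rw [← distinct_take Y _ (by omega), ← hm, hmX]
      have hc : cntTop Y t = cntTop X t :=
        cntTop_congr fun k hk => (hpv k hk).symm
      -- entry formulas
      have hAk : ∀ k, k < X.length - 1 → (prevEnc (rotR1 X)).get? (k+1) =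
          some (if k = lX then Sum.inr ((k + 1 : ℕ) : ℕ∞) else prevVal X k) := by
        intro k hk
        rw [prevEnc_get?, if_pos (by rw [length_rotR1]; omega),
          rot_prevVal_entry_inr hXne hcX hk]
      have hBk : ∀ k, k < Y.length - 1 → (prevEnc (rotR1 Y)).get? (k+1) =
          some (if k = lY then Sum.inr ((k + 1 : ℕ) : ℕ∞) else prevVal Y k) := by
        intro k hk
        rw [prevEnc_get?, if_pos (by rw [length_rotR1]; omega),
          rot_prevVal_entry_inr hYne hcY hk]
      have hA0 : (prevEnc (rotR1 X)).get? 0 = some (Sum.inr ⊤) := by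
        rw [prevEnc_get?, if_pos (by rw [length_rotR1]; omega),
          rot_prevVal_zero_inr hXne hcX]
      have hB0 : (prevEnc (rotR1 Y)).get? 0 = some (Sum.inr ⊤) := by
        rw [prevEnc_get?, if_pos (by rw [length_rotR1]; omega),
          rot_prevVal_zero_inr hYne hcY]
      by_cases hlt : lX < t
      · -- the replaced position falls inside the common prefix
        have hm_le : m ≤ cntTop X t := by
          rw [hmdef]; exact cntTop_mono X (by omega)
        have hYlt : lY < t := by
          by_contra hge
          push_neg at hge
          have h1 : cntTop Y t ≤ cntTop Y lY := cntTop_mono Y hge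
          have h2 := cntTop_succ Y lY
          rw [if_pos topY] at h2
          omega
        have topX' : prevVal X lY = Sum.inr ⊤ := by rw [hpv lY hYlt]; exact topY
        have hcnt : cntTop X (lY + 1) = m := by
          rw [← hmY]
          exact cntTop_congr fun k hk => hpv k (by omega)
        have hXY : lX = lY := top_pos_unique topX topX' (by rw [hcnt])
        have hprefix : ∀ k < t + 1,
            (prevEnc (rotR1 X)).get? k = (prevEnc (rotR1 Y)).get? k := by
          intro k hk
          cases k with
          | zero => rw [hA0, hB0]
          | succ k =>
            rw [hAk k (by omega), hBk k (by omega), hXY]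
            by_cases hkl : k = lY
            · rw [if_pos hkl, if_pos hkl]
            · rw [if_neg hkl, if_neg hkl, hpv k (by omega)]
        rcases lt_or_eq_of_le (show t ≤ X.length - 1 by omega) with htn | htn
        · left
          refine lex_of_take _ _ (t + 1) hprefix
            (show _ = some (prevVal X t) from ?_)
            (show _ = some (prevVal Y t) from ?_) hr'
          · rw [hAk t htn, if_neg (by omega)]
          · rw [hBk t (by omega), if_neg (by omega)]
        · right
          apply List.ext_get?
          intro k
          rcases Nat.lt_or_ge k X.length with hkn | hkn
          · cases k with
            | zero => rw [hA0, hB0]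
            | succ k => exact hprefix (k + 1) (by omega)
          · rw [prevEnc_get?, prevEnc_get?, if_neg (by rw [length_rotR1]; omega),
              if_neg (by rw [length_rotR1]; omega)]
      · -- the replaced position is at or beyond the first difference
        push_neg at hlt
        have htlX : t < lX := by
          rcases lt_or_eq_of_le hlt with h | h
          · exact h
          · exfalso; rw [← h] at topX; rw [topX] at hr'; exact not_pvlt_top _ hr'
        have hm_gt : cntTop X t < m := by
          have h1 : cntTop X t ≤ cntTop X lX := cntTop_mono X (by omega)
          have h2 := cntTop_succ X lX
          rw [if_pos topX] at h2
          omega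
        have hYge : t ≤ lY := by
          by_contra hlt'
          push_neg at hlt'
          have h1 : cntTop Y (lY + 1) ≤ cntTop Y t := cntTop_mono Y (by omega)
          omega
        have htn : t < X.length - 1 := by omega
        have hprefix : ∀ k < t + 1,
            (prevEnc (rotR1 X)).get? k = (prevEnc (rotR1 Y)).get? k := by
          intro k hk
          cases k with
          | zero => rw [hA0, hB0]
          | succ k =>
            rw [hAk k (by omega), hBk k (by omega), if_neg (by omega), if_neg (by omega),
              hpv k (by omega)]
        have haX : (prevEnc (rotR1 X)).get? (t + 1) = some (prevVal X t) := by
          rw [hAk t htn, if_neg (by omega)]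
        left
        by_cases hty : t = lY
        · have hqt : prevVal Y t = Sum.inr ⊤ := by rw [hty]; exact topY
          have hbY : (prevEnc (rotR1 Y)).get? (t + 1) =
              some (Sum.inr ((t + 1 : ℕ) : ℕ∞)) := by
            rw [hBk t (by omega), if_pos hty]
          refine lex_of_take _ _ (t + 1) hprefix haX hbY ?_
          rcases hp : prevVal X t with a | v
          · exact trivial
          · have hvlt : v < ⊤ := by rw [hp, hqt] at hr'; exact hr'
            have hvle : v ≤ (t : ℕ∞) := prevVal_inr_le hp hvlt.ne
            show (v : ℕ∞) < ((t + 1 : ℕ) : ℕ∞)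
            refine lt_of_le_of_lt hvle ?_
            exact_mod_cast Nat.lt_succ_self t
        · have hbY : (prevEnc (rotR1 Y)).get? (t + 1) = some (prevVal Y t) := by
            rw [hBk t (by omega), if_neg hty]
          exact lex_of_take _ _ (t + 1) hprefix haX hbY hr'

lemma get1_encodeE_eq_lastE [LinearOrder σ] [DecidableEq π] [Inhabited σ]
    (X : List (σ ⊕ π)) (hn : 1 ≤ X.length) :
    get1 (encodeE X) X.length = lastE X := by
  unfold get1
  have hlen : (encodeE X).length = X.length := by unfold encodeE; simp
  have h0 : X.length - (X.length - 1 + 1) = 0 := by omega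
  have hget : (encodeE X).get? (X.length - 1) =
      some (match X.get? (X.length - 1) with
        | none => Sum.inr 0
        | some (Sum.inl a) => Sum.inl a
        | some (Sum.inr b) =>
          Sum.inr (distinctParams (X.take (X.idxOf (Sum.inr b) + 1)))) := by
    unfold encodeE
    rw [List.get?_eq_getElem?, List.getElem?_map, List.getElem?_range (by omega)]
    simp only [Option.map_some]
    congr 1
    rw [← List.get?_eq_getElem?]
    rcases hc : X.get? (X.length - 1) with _ | (a | b)
    · rfl
    · rfl
    · simp only [h0]
      rfl
  rw [List.getD_eq_getElem?_getD, ← List.get?_eq_getElem?, hget]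
  unfold lastE
  rcases hc : X.get? (X.length - 1) with _ | (a | b) <;> simp only [hc] <;> rfl


/-- If `1 ≤ i < j ≤ n` and `L_T[i] = L_T[j]`, then
`LF_T(i) < LF_T(j)`. -/
theorem LF_lt_of_Larr_eq [LinearOrder σ] [DecidableEq π] [Inhabited σ]
    (d : σ) (hd : ∀ a : σ, d ≤ a)
    (T : List (σ ⊕ π)) (hT : EndsWith T d)
    (RA : Fin T.length ≃ Fin T.length) (hRA : IsRA T RA)
    (LF : Fin T.length ≃ Fin T.length) (hLF : IsLF T RA LF)
    (i j : Fin T.length) (hij : i < j) (hL : Larr T RA i = Larr T RA j) :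
    LF i < LF j := by
  have hn : 1 ≤ T.length := hT.1
  set X := rotR T ((RA i).val + 1) with hXdef
  set Y := rotR T ((RA j).val + 1) with hYdef
  have hXlen : X.length = T.length := length_rotR T _
  have hYlen : Y.length = T.length := length_rotR T _
  have hlex : List.Lex pvlt (prevEnc X) (prevEnc Y) := hRA i j hij
  have hL' : lastE X = lastE Y := by
    have e1 : Larr T RA i = lastE X := by
      rw [Larr, ← hXdef, ← hXlen, get1_encodeE_eq_lastE X (by omega)]
    have e2 : Larr T RA j = lastE Y := by
      rw [Larr, ← hYdef, ← hYlen, get1_encodeE_eq_lastE Y (by omega)]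
    rw [← e1, ← e2, hL]
  have hstep := step_lemma (by omega) (by omega) hlex hL'
  have hrotX : rotR1 X = rotR T ((RA (LF i)).val + 1) := by
    rw [← hLF i]; rfl
  have hrotY : rotR1 Y = rotR T ((RA (LF j)).val + 1) := by
    rw [← hLF j]; rfl
  rw [hrotX, hrotY] at hstep
  by_contra hcon
  push_neg at hcon
  rcases lt_or_eq_of_le hcon with hlt | heq
  · have hback := hRA (LF j) (LF i) hlt
    rcases hstep with hstep | hstep
    · exact lex_asymm (fun a b => pvlt_asymm a b) hstep hback
    · rw [hstep] at hback
      exact lex_irrefl (fun a => pvlt_irrefl a) _ hback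
  · have : i = j := LF.injective (Fin.val_injective (by omega) : LF j = LF i).symm
    omega
end

section
/- Let T = cS, where c ∈ (Σ ∪ Π)∖{$} and S is a p-string of length n ≥ 1 ending with $, with $ occurring nowhere else in S. For any i and j with 1 ≤ i < j ≤ n, RA_S⁻¹[i] < RA_S⁻¹[j] if and only if RA_T⁻¹[i] < RA_T⁻¹[j]. -/
/-! Common framework: parameterized strings over static alphabet `σ` and
parameter alphabet `π`.  A p-string is a `List (σ ⊕ π)`. -/

variable {σ π : Type*}

instance pvlt_irrefl_s8 [LinearOrder σ] : IsIrrefl (σ ⊕ ℕ∞) (@pvlt σ _) :=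
  ⟨by rintro (a|x) h <;> exact lt_irrefl _ h⟩

instance pvlt_asymm_s8 [LinearOrder σ] : IsAsymm (σ ⊕ ℕ∞) (@pvlt σ _) :=
  ⟨by rintro (a|x) (b|y) h1 h2 <;> simp only [pvlt] at h1 h2 <;>
      first | exact absurd h1 (not_lt.2 h2.le) | exact h2 | exact h1⟩

lemma lex_iff_take' {α : Type*} {r : α → α → Prop} [IsIrrefl α r] :
    ∀ (k : ℕ) (X Y : List α), X.take k ≠ Y.take k →
    (List.Lex r X Y ↔ List.Lex r (X.take k) (Y.take k))
  | 0, _, _, h => absurd rfl h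
  | _+1, [], [], h => absurd rfl h
  | k+1, [], y::ys, _ => iff_of_true List.Lex.nil (by simp [List.take_succ_cons])
  | k+1, x::xs, [], _ => iff_of_false List.not_lex_nil (by
      simp only [List.take_nil]; exact List.not_lex_nil)
  | k+1, x::xs, y::ys, h => by
    rcases eq_or_ne x y with rfl | hxy
    · have h' : xs.take k ≠ ys.take k := fun hh => h (by simp [List.take_succ_cons, hh])
      rw [List.take_succ_cons, List.take_succ_cons, List.cons_lex_cons_iff, List.cons_lex_cons_iff]
      simp only [irrefl x, false_or, true_and]
      exact lex_iff_take' k xs ys h'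
    · simp only [List.take_succ_cons]
      constructor
      · intro hl
        cases hl with
        | rel hr => exact List.Lex.rel hr
        | cons _ => exact absurd rfl hxy
      · intro hl
        cases hl with
        | rel hr => exact List.Lex.rel hr
        | cons _ => exact absurd rfl hxy

lemma length_prevEnc [DecidableEq σ] [DecidableEq π] (W : List (σ ⊕ π)) :
    (prevEnc W).length = W.length := by simp [prevEnc]

lemma prevEnc_take [DecidableEq σ] [DecidableEq π] (X Y : List (σ ⊕ π)) :
    (prevEnc (X ++ Y)).take X.length = prevEnc X := by
  unfold prevEnc
  rw [← List.map_take, List.take_range, List.length_append,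
    min_eq_left (Nat.le_add_right _ _)]
  apply List.map_congr_left
  intro k hk
  rw [List.mem_range] at hk
  have hget : ∀ m, m < X.length → (X ++ Y)[m]? = X[m]? := by
    intro m hm
    rw [List.getElem?_append_left hm]
  rw [hget k hk]
  rcases h : X[k]? with _ | (a | b)
  · rfl
  · rfl
  · have : ((List.range k).filter fun j => (X ++ Y)[j]? = some (Sum.inr b))
        = ((List.range k).filter fun j => X[j]? = some (Sum.inr b)) := by
      apply List.filter_congr
      intro m hm
      rw [List.mem_range] at hm
      rw [hget m (lt_trans hm hk)]
    simp only [this]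

lemma prevEnc_get?_inl [DecidableEq σ] [DecidableEq π] (W : List (σ ⊕ π)) (k : ℕ) (a : σ)
    (h : W[k]? = some (Sum.inl a)) : (prevEnc W)[k]? = some (Sum.inl a) := by
  have hk : k < W.length := by
    exact (List.getElem?_eq_some_iff.1 h).choose
  unfold prevEnc
  rw [List.getElem?_map, List.getElem?_range hk, Option.map_some, h]

lemma prevEnc_get?_inr [DecidableEq σ] [DecidableEq π] (W : List (σ ⊕ π)) (k : ℕ) (b : π)
    (h : W[k]? = some (Sum.inr b)) : ∃ x, (prevEnc W)[k]? = some (Sum.inr x) := by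
  have hk : k < W.length := by
    exact (List.getElem?_eq_some_iff.1 h).choose
  unfold prevEnc
  rw [List.getElem?_map, List.getElem?_range hk, Option.map_some, h]
  dsimp only
  split
  · exact ⟨⊤, rfl⟩
  · exact ⟨_, rfl⟩

lemma rotR_eq_rotate {α : Type*} (W : List α) (k : ℕ) (h : k ≤ W.length) :
    rotR W k = W.rotate (W.length - k) := by
  induction k with
  | zero => simp [rotR, List.rotate_length]
  | succ k ih =>
    have hk : k ≤ W.length := by omega
    rw [rotR, ih hk, rotR1, List.length_rotate, List.rotate_rotate]
    rcases Nat.eq_zero_or_pos W.length with h0 | h0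
    · simp [h0]
    · have : W.length - k + (W.length - 1) = W.length + (W.length - (k + 1)) := by omega
      rw [this, ← List.rotate_rotate, List.rotate_length]

lemma rotR_eq_drop_append {α : Type*} (W : List α) (p : ℕ) (h : p ≤ W.length) :
    rotR W p = W.drop (W.length - p) ++ W.take (W.length - p) := by
  rw [rotR_eq_rotate W p h, List.rotate_eq_drop_append_take (Nat.sub_le _ _)]

lemma sum_beq_iff [DecidableEq σ] [DecidableEq π] (a b : σ ⊕ π) : (a == b) = true ↔ a = b := by
  cases a <;> cases b <;> simp [BEq.beq] <;> rename_i x y <;> constructor <;> intro h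
  all_goals first
    | (apply eq_of_beq; exact h)
    | (subst h; exact BEq.rfl)

instance sumLawfulBEq [DecidableEq σ] [DecidableEq π] : LawfulBEq (σ ⊕ π) :=
  have : ReflBEq (σ ⊕ π) := ⟨fun {a} => (sum_beq_iff a a).2 rfl⟩
  ⟨fun {a b} h => (sum_beq_iff a b).1 h⟩

lemma rank_lt_iff [LinearOrder σ] [DecidableEq π] (T : List (σ ⊕ π))
    (RA : Fin T.length ≃ Fin T.length) (hRA : IsRA T RA) (a b : Fin T.length) (hab : a ≠ b) :
    RA.symm a < RA.symm b ↔
      List.Lex pvlt (prevEnc (rotR T (a.val + 1))) (prevEnc (rotR T (b.val + 1))) := by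
  constructor
  · intro h
    have h2 := hRA _ _ h
    simpa using h2
  · intro h
    rcases lt_trichotomy (RA.symm a) (RA.symm b) with h' | h' | h'
    · exact h'
    · exact absurd (RA.symm.injective h') hab
    · have h2 := hRA _ _ h'
      simp only [Equiv.apply_symm_apply] at h2
      exact absurd h (asymm h2)

lemma main_aux [LinearOrder σ] [DecidableEq π]
    (d : σ) (S : List (σ ⊕ π)) (hS : EndsWith S d) (c : σ ⊕ π)
    (i j : ℕ) (h1 : 1 ≤ i) (h2 : i < j) (h3 : j ≤ S.length) :
    (List.Lex pvlt (prevEnc (rotR S i)) (prevEnc (rotR S j)) ↔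
      List.Lex pvlt (prevEnc (rotR (c :: S) i)) (prevEnc (rotR (c :: S) j))) := by
  obtain ⟨hn, hlast, hcount⟩ := hS
  set n := S.length with hnn
  -- rotation decompositions
  have hSi : rotR S i = S.drop (n - i) ++ S.take (n - i) :=
    rotR_eq_drop_append S i (by omega)
  have hSj : rotR S j = S.drop (n - j) ++ S.take (n - j) :=
    rotR_eq_drop_append S j h3
  have hTi : rotR (c :: S) i = S.drop (n - i) ++ (c :: S.take (n - i)) := by
    rw [rotR_eq_drop_append (c :: S) i (by simp; omega)]
    have e : (c :: S).length - i = (n - i) + 1 := by simp; omega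
    rw [e, List.drop_succ_cons, List.take_succ_cons]
  have hTj : rotR (c :: S) j = S.drop (n - j) ++ (c :: S.take (n - j)) := by
    rw [rotR_eq_drop_append (c :: S) j (by simp; omega)]
    have e : (c :: S).length - j = (n - j) + 1 := by simp; omega
    rw [e, List.drop_succ_cons, List.take_succ_cons]
  have hli : (S.drop (n - i)).length = i := by simp; omega
  have hlj : (S.drop (n - j)).length = j := by simp; omega
  -- take-prefix identities
  have tSi : (prevEnc (rotR S i)).take i = prevEnc (S.drop (n - i)) := by
    have h := prevEnc_take (S.drop (n - i)) (S.take (n - i))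
    rw [hli] at h; rw [hSi]; exact h
  have tTi : (prevEnc (rotR (c :: S) i)).take i = prevEnc (S.drop (n - i)) := by
    have h := prevEnc_take (S.drop (n - i)) (c :: S.take (n - i))
    rw [hli] at h; rw [hTi]; exact h
  have tSj : (prevEnc (rotR S j)).take i = (prevEnc (S.drop (n - j))).take i := by
    have h := prevEnc_take (S.drop (n - j)) (S.take (n - j))
    rw [hlj] at h
    rw [hSj, ← h, List.take_take, min_eq_left (le_of_lt h2)]
  have tTj : (prevEnc (rotR (c :: S) j)).take i = (prevEnc (S.drop (n - j))).take i := by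
    have h := prevEnc_take (S.drop (n - j)) (c :: S.take (n - j))
    rw [hlj] at h
    rw [hTj, ← h, List.take_take, min_eq_left (le_of_lt h2)]
  -- last char of S
  have hgetlast : S[n - 1]? = some (Sum.inl d) := by
    rw [← List.getLast?_eq_getElem?]; exact hlast
  have hnotd : ∀ m, m < n - 1 → S[m]? ≠ some (Sum.inl d) := by
    intro m hm hEq
    have hsplit := List.take_append_drop (n - 1) S
    have hmem1 : Sum.inl d ∈ S.take (n - 1) :=
      List.mem_of_getElem? (l := S.take (n - 1)) (i := m) (by rw [List.getElem?_take_of_lt hm]; exact hEq)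
    have hmem2 : Sum.inl d ∈ S.drop (n - 1) :=
      List.mem_of_getElem? (l := S.drop (n - 1)) (i := 0) (by
        rw [List.getElem?_drop, Nat.add_zero]
        exact hgetlast)
    have hc1 : 0 < (S.take (n - 1)).count (Sum.inl d) := List.count_pos_iff.mpr hmem1
    have hc2 : 0 < (S.drop (n - 1)).count (Sum.inl d) := List.count_pos_iff.mpr hmem2
    have hcc : S.count (Sum.inl d) = (S.take (n-1)).count (Sum.inl d)
        + (S.drop (n-1)).count (Sum.inl d) := by
      conv_lhs => rw [← hsplit]
      rw [List.count_append]
    omega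
  -- the two prefixes differ at position i-1
  have hA : (prevEnc (S.drop (n - i)))[i - 1]? = some (Sum.inl d) := by
    apply prevEnc_get?_inl
    rw [List.getElem?_drop]
    have e : n - i + (i - 1) = n - 1 := by omega
    rw [e]; exact hgetlast
  have hB : ((prevEnc (S.drop (n - j))).take i)[i - 1]?
      ≠ some (Sum.inl d) := by
    rw [List.getElem?_take_of_lt (by omega)]
    have hm : n - j + (i - 1) < n - 1 := by omega
    have hmn : n - j + (i - 1) < n := by omega
    have : ∃ v, S[n - j + (i - 1)]? = some v := by
      exact ⟨_, List.getElem?_eq_some_iff.2 ⟨hmn, rfl⟩⟩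
    obtain ⟨v, hv⟩ := this
    have hgd : (S.drop (n - j))[i - 1]? = some v := by
      rw [List.getElem?_drop]
      exact hv
    rcases v with a | b
    · have hne : a ≠ d := fun hEq => hnotd _ hm (by rw [hv, hEq])
      rw [prevEnc_get?_inl _ _ _ hgd]
      simp [hne]
    · obtain ⟨x, hx⟩ := prevEnc_get?_inr _ _ _ hgd
      rw [hx]; simp
  have hAB : (prevEnc (rotR S i)).take i ≠ (prevEnc (rotR S j)).take i := by
    rw [tSi, tSj]
    intro hEq
    apply hB
    rw [← hEq]
    exact hA
  have hAB' : (prevEnc (rotR (c :: S) i)).take i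
      ≠ (prevEnc (rotR (c :: S) j)).take i := by
    rw [tTi, tTj]
    intro hEq
    apply hB
    rw [← hEq]
    exact hA
  rw [lex_iff_take' i _ _ hAB, lex_iff_take' i _ _ hAB', tSi, tSj, tTi, tTj]

/-- Let `T = cS` with `c ∈ (Σ ∪ Π) ∖ {$}` and `S` a p-string of
length `n ≥ 1` ending with `$` (occurring nowhere else).  For `1 ≤ i < j ≤ n`,
`RA_S⁻¹[i] < RA_S⁻¹[j]` iff `RA_T⁻¹[i] < RA_T⁻¹[j]`. -/
theorem RAinv_lt_iff [LinearOrder σ] [DecidableEq π]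
    (d : σ) (hd : ∀ a : σ, d ≤ a)
    (S : List (σ ⊕ π)) (hS : EndsWith S d)
    (c : σ ⊕ π) (hc : c ≠ Sum.inl d)
    (RAS : Fin S.length ≃ Fin S.length) (hRAS : IsRA S RAS)
    (RAT : Fin (c :: S).length ≃ Fin (c :: S).length) (hRAT : IsRA (c :: S) RAT)
    (i j : ℕ) (h1 : 1 ≤ i) (h2 : i < j) (h3 : j ≤ S.length) :
    RAS.symm ⟨i - 1, by omega⟩ < RAS.symm ⟨j - 1, by omega⟩ ↔
      RAT.symm ⟨i - 1, by simp only [List.length_cons]; omega⟩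
        < RAT.symm ⟨j - 1, by simp only [List.length_cons]; omega⟩ := by
  have hmain := main_aux d S hS c i j h1 h2 h3
  rw [rank_lt_iff S RAS hRAS _ _ (Fin.ne_of_val_ne (by simp only []; omega)),
    rank_lt_iff (c :: S) RAT hRAT _ _ (Fin.ne_of_val_ne (by simp only []; omega))]
  have ei : i - 1 + 1 = i := by omega
  have ej : j - 1 + 1 = j := by omega
  simp only [ei, ej]
  exact hmain
end
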